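/- Let (Ω, μ) be a probability space, let c be a measurable event with μ(c) > 0, and let z, ξ_a, ξ_b be square-integrable real random variables such that ∫_c ξ_a dμ = ∫_c ξ_b dμ = 0, ∫_c z·ξ_a dμ = ∫_c z·ξ_b dμ = 0, and ∫_c ξ_a·ξ_b dμ = 0. Set a = z + ξ_a and b = z + ξ_b. Then (∫_c (a + b) dμ)² ≤ 4 · μ(c) · ∫_c (a·b) dμ. (This is the classical objective-realism inequality ⟨a+b|c⟩² ≤ 4⟨ab|c⟩ for two identical independent noisy readouts of an objectively real value z, conditioned on c.) -/

import Mathlib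

open MeasureTheory

/-- Product of two L²-functions is integrable (via AM–GM pointwise bound). -/
lemma aux_integrable_mul {Ω : Type*} [MeasurableSpace Ω] {μ : Measure Ω}
    {f g : Ω → ℝ} (hf : MemLp f 2 μ) (hg : MemLp g 2 μ) :
    Integrable (fun x => f x * g x) μ := by
  have h1 : Integrable (fun x => (f x ^ 2 + g x ^ 2) / 2) μ :=
    (hf.integrable_sq.add hg.integrable_sq).div_const 2
  refine h1.mono' (hf.1.mul hg.1) (Filter.Eventually.of_forall fun x => ?_)
  rw [Real.norm_eq_abs, abs_mul]
  nlinarith [sq_nonneg (|f x| - |g x|), sq_abs (f x), sq_abs (g x), abs_nonneg (f x), abs_nonneg (g x)]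

/-- Cauchy–Schwarz: (∫ f)² ≤ μ(univ) ∫ f². -/
lemma aux_cs {Ω : Type*} [MeasurableSpace Ω] (ν : Measure Ω) [IsFiniteMeasure ν]
    (f : Ω → ℝ) (hf : Integrable f ν) (hf2 : Integrable (fun x => f x ^ 2) ν) :
    (∫ x, f x ∂ν) ^ 2 ≤ (ν Set.univ).toReal * ∫ x, f x ^ 2 ∂ν := by
  have key : ∀ t : ℝ, 0 ≤ (ν Set.univ).toReal * (t * t) + (2 * ∫ x, f x ∂ν) * t
      + ∫ x, f x ^ 2 ∂ν := by
    intro t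
    have hi : Integrable (fun x => (t + f x) ^ 2) ν := by
      have : (fun x => (t + f x) ^ 2) = fun x => t ^ 2 + 2 * t * f x + f x ^ 2 := by
        funext x; ring
      rw [this]
      exact ((integrable_const _).add (hf.const_mul _)).add hf2
    have h0 : 0 ≤ ∫ x, (t + f x) ^ 2 ∂ν :=
      integral_nonneg fun x => sq_nonneg _
    have hexp : ∫ x, (t + f x) ^ 2 ∂ν
        = (ν Set.univ).toReal * (t * t) + (2 * ∫ x, f x ∂ν) * t + ∫ x, f x ^ 2 ∂ν := by
      have : (fun x => (t + f x) ^ 2) = fun x => t ^ 2 + (2 * t) * f x + f x ^ 2 := by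
        funext x; ring
      have h1 : Integrable (fun x => t ^ 2 + 2 * t * f x) ν := by
        exact (integrable_const _).add (hf.const_mul _)
      rw [this]
      rw [integral_add h1 hf2,
        integral_add (integrable_const (t ^ 2)) (hf.const_mul (2 * t)), integral_const,
        integral_const_mul]
      simp only [smul_eq_mul, Measure.real]
      ring
    linarith [hexp ▸ h0]
  have hd := discrim_le_zero key
  rw [discrim] at hd
  nlinarith [hd]


/-- The classical objective-realism inequality `⟨a+b|c⟩² ≤ 4⟨ab|c⟩` for two identical
independent noisy readouts `a = z + ξa`, `b = z + ξb` of an objectively real value `z`,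
conditioned on an event `c` of positive probability. -/
theorem stmt_0 {Ω : Type*} [MeasurableSpace Ω] (μ : Measure Ω) [IsProbabilityMeasure μ]
    (c : Set Ω) (hc : MeasurableSet c) (hcpos : 0 < μ c)
    (z ξa ξb : Ω → ℝ)
    (hz : MemLp z 2 μ) (hξa : MemLp ξa 2 μ) (hξb : MemLp ξb 2 μ)
    (ha0 : ∫ x in c, ξa x ∂μ = 0) (hb0 : ∫ x in c, ξb x ∂μ = 0)
    (hza : ∫ x in c, z x * ξa x ∂μ = 0) (hzb : ∫ x in c, z x * ξb x ∂μ = 0)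
    (hab : ∫ x in c, ξa x * ξb x ∂μ = 0) :
    (∫ x in c, ((z x + ξa x) + (z x + ξb x)) ∂μ) ^ 2 ≤
      4 * (μ c).toReal * ∫ x in c, (z x + ξa x) * (z x + ξb x) ∂μ := by
  -- integrabilities on the restricted measure
  have hzi : Integrable z (μ.restrict (s := c)) := (hz.integrable one_le_two).restrict (s := c)
  have hai : Integrable ξa (μ.restrict (s := c)) := (hξa.integrable one_le_two).restrict (s := c)
  have hbi : Integrable ξb (μ.restrict (s := c)) := (hξb.integrable one_le_two).restrict (s := c)
  have hzz : Integrable (fun x => z x * z x) (μ.restrict (s := c)) :=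
    (aux_integrable_mul hz hz).restrict (s := c)
  have hzai : Integrable (fun x => z x * ξa x) (μ.restrict (s := c)) :=
    (aux_integrable_mul hz hξa).restrict (s := c)
  have hzbi : Integrable (fun x => z x * ξb x) (μ.restrict (s := c)) :=
    (aux_integrable_mul hz hξb).restrict (s := c)
  have habi : Integrable (fun x => ξa x * ξb x) (μ.restrict (s := c)) :=
    (aux_integrable_mul hξa hξb).restrict (s := c)
  -- first moment
  have h1 : ∫ x in c, ((z x + ξa x) + (z x + ξb x)) ∂μ = 2 * ∫ x in c, z x ∂μ := by
    have e : (fun x => (z x + ξa x) + (z x + ξb x))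
        = fun x => (2 * z x + ξa x) + ξb x := by funext x; ring
    have i1 : Integrable (fun x => 2 * z x + ξa x) (μ.restrict c) := by
      exact (hzi.const_mul 2).add hai
    rw [e, integral_add i1 hbi, integral_add (hzi.const_mul 2) hai,
      integral_const_mul, ha0, hb0]
    ring
  -- second moment
  have h2 : ∫ x in c, (z x + ξa x) * (z x + ξb x) ∂μ = ∫ x in c, z x * z x ∂μ := by
    have e : (fun x => (z x + ξa x) * (z x + ξb x))
        = fun x => ((z x * z x + z x * ξb x) + z x * ξa x) + ξa x * ξb x := by
      funext x; ring
    have i1 : Integrable (fun x => z x * z x + z x * ξb x) (μ.restrict c) := by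
      exact hzz.add hzbi
    have i2 : Integrable (fun x => z x * z x + z x * ξb x + z x * ξa x) (μ.restrict c) := by
      exact i1.add hzai
    rw [e, integral_add i2 habi, integral_add i1 hzai, integral_add hzz hzbi,
      hza, hzb, hab]
    ring
  rw [h1, h2]
  have hcs := aux_cs (μ.restrict (s := c)) z hzi (by
    have : (fun x => z x ^ 2) = fun x => z x * z x := by funext x; ring
    rw [this]; exact hzz)
  have hm : ((μ.restrict (s := c)) Set.univ).toReal = (μ c).toReal := by
    rw [Measure.restrict_apply_univ]
  rw [hm] at hcs
  have hsq : ∫ x in c, z x ^ 2 ∂μ = ∫ x in c, z x * z x ∂μ := by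
    congr 1; funext x; ring
  rw [hsq] at hcs
  nlinarith [hcs]
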